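/- Let D be a partially ordered set with objects a, b, c such that a ≤ c and b ≤ c hold, a and b are incomparable, and for every d ≤ a the join b ∨ d exists in D. Let E be the poset extending D by adding the single relation a ≤ b (and closing under transitivity). Then the inclusion i : D → E is final: for every x ∈ E the comma poset {y ∈ D : x ≤_E y} is nonempty and connected. -/

import Mathlib

/-- The order relation of the poset `E` obtained from `D` by adjoining the single
relation `a ≤ b` and closing under transitivity: `u ≤_E v` iff `u ≤ v` in `D`, or
`u ≤ a` and `b ≤ v`. -/
def leE {D : Type*} [PartialOrder D] (a b : D) (u v : D) : Prop :=
  u ≤ v ∨ (u ≤ a ∧ b ≤ v)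

/-- Let `D` be a poset with elements `a, b, c` such that `a ≤ c`, `b ≤ c`, `a` and `b`
are incomparable, and for every `d ≤ a` the join `b ∨ d` exists in `D`.  Let `E` be
the poset extending `D` by the relation `a ≤ b` (closed under transitivity).  Then the
inclusion `D → E` is final: for every `x`, the comma poset `{y ∈ D : x ≤_E y}` is
nonempty and connected (any two of its elements are joined by a zigzag of
comparabilities within it). -/
theorem stmt19 {D : Type*} [PartialOrder D] (a b c : D)
    (hac : a ≤ c) (hbc : b ≤ c) (hab : ¬a ≤ b) (hba : ¬b ≤ a)
    (hjoin : ∀ d : D, d ≤ a →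
      ∃ j : D, b ≤ j ∧ d ≤ j ∧ ∀ z : D, b ≤ z → d ≤ z → j ≤ z)
    (x : D) :
    ({y : D | leE a b x y}).Nonempty ∧
      ∀ y z : D, leE a b x y → leE a b x z →
        Relation.ReflTransGen
          (fun u v : D => (leE a b x u ∧ leE a b x v) ∧ (u ≤ v ∨ v ≤ u)) y z := by

  constructor
  · exact ⟨x, Or.inl le_rfl⟩
  · intro y z hy hz
    set r := fun u v : D => (leE a b x u ∧ leE a b x v) ∧ (u ≤ v ∨ v ≤ u) with hr
    have hsymm : Symmetric r := fun u v h => ⟨⟨h.1.2, h.1.1⟩, h.2.symm⟩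
    by_cases hxa : x ≤ a
    · obtain ⟨j, hbj, hxj, -⟩ := hjoin x hxa
      have hb : leE a b x b := Or.inr ⟨hxa, le_rfl⟩
      have hj : leE a b x j := Or.inr ⟨hxa, hbj⟩
      have hx : leE a b x x := Or.inl le_rfl
      have key : ∀ w, leE a b x w → Relation.ReflTransGen r w b := by
        intro w hw
        rcases hw with hw | ⟨-, hbw⟩
        · exact Relation.ReflTransGen.head ⟨⟨Or.inl hw, hx⟩, Or.inr hw⟩
            (Relation.ReflTransGen.head ⟨⟨hx, hj⟩, Or.inl hxj⟩
              (Relation.ReflTransGen.single ⟨⟨hj, hb⟩, Or.inr hbj⟩))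
        · exact Relation.ReflTransGen.single ⟨⟨Or.inr ⟨hxa, hbw⟩, hb⟩, Or.inr hbw⟩
      exact (key y hy).trans ((@Relation.ReflTransGen.symmetric _ r ⟨hsymm⟩).symm _ _ (key z hz))
    · have hy' : x ≤ y := by rcases hy with h | ⟨h, -⟩; exacts [h, absurd h hxa]
      have hz' : x ≤ z := by rcases hz with h | ⟨h, -⟩; exacts [h, absurd h hxa]
      have hx : leE a b x x := Or.inl le_rfl
      exact Relation.ReflTransGen.head ⟨⟨Or.inl hy', hx⟩, Or.inr hy'⟩
        (Relation.ReflTransGen.single ⟨⟨hx, Or.inl hz'⟩, Or.inl hz'⟩)
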